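/- Let Y be a scheme, F a locally free sheaf of rank r on Y, and s₂, …, s_r global sections of F such that the induced map i : O_Y^{r−1} → F has invertible cokernel L (i.e., the quotient F/im(i) is an invertible sheaf). Then the map w : F → ⋀^r F defined by w(m) = m ∧ s₂ ∧ ⋯ ∧ s_r is surjective with kernel equal to the image of i, giving a short exact sequence 0 → O_Y^{r−1} → F → ⋀^r F → 0, and ⋀^r F ≅ L. -/
import Mathlib

namespace Stmt10Aux

open TensorProduct

section Generic

variable {R : Type*} [CommRing R] {L : Type*} {N : Type*}
  [AddCommGroup L] [Module R L] [AddCommGroup N] [Module R N]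

/-- The swap-the-two-L-factors automorphism of `(L ⊗ N) ⊗ (L ⊗ N)`. -/
noncomputable def swapLL : ((L ⊗[R] N) ⊗[R] (L ⊗[R] N)) ≃ₗ[R] ((L ⊗[R] N) ⊗[R] (L ⊗[R] N)) :=
  (tensorTensorTensorComm R L N L N).trans
    ((congr (TensorProduct.comm R L L) (LinearEquiv.refl R (N ⊗[R] N))).trans
      (tensorTensorTensorComm R L L N N))

@[simp] lemma swapLL_tmul (a c : L) (b d : N) :
    swapLL (R := R) ((a ⊗ₜ b) ⊗ₜ (c ⊗ₜ d)) = (c ⊗ₜ b) ⊗ₜ (a ⊗ₜ d) := by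
  simp [swapLL]

variable (μ : (L ⊗[R] N) ≃ₗ[R] R)

/-- `Φ = μ ⊗ μ`. -/
noncomputable def Phi : ((L ⊗[R] N) ⊗[R] (L ⊗[R] N)) ≃ₗ[R] R :=
  (congr μ μ).trans (TensorProduct.lid R R)

@[simp] lemma Phi_tmul (z w : L ⊗[R] N) : Phi μ (z ⊗ₜ w) = μ z * μ w := by
  simp [Phi, smul_eq_mul]

/-- The "symmetry defect" scalar of an invertible module. -/
noncomputable def Sinv : R := Phi μ (swapLL ((Phi μ).symm 1))

lemma Phi_swapLL (z : (L ⊗[R] N) ⊗[R] (L ⊗[R] N)) :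
    Phi μ (swapLL z) = Phi μ z * Sinv μ := by
  have : Phi μ (swapLL z) = Phi μ (swapLL ((Phi μ).symm (Phi μ z))) := by
    rw [LinearEquiv.symm_apply_apply]
  rw [this]
  have h2 : ∀ r : R, Phi μ (swapLL ((Phi μ).symm r)) = r * Sinv μ := by
    intro r
    have : (Phi μ).symm r = r • (Phi μ).symm 1 := by
      rw [← map_smul, smul_eq_mul, mul_one]
    rw [this, map_smul, map_smul, smul_eq_mul, Sinv]
  exact h2 _

lemma B_identity (a c : L) (b d : N) :
    μ (c ⊗ₜ b) * μ (a ⊗ₜ d) = Sinv μ * (μ (a ⊗ₜ b) * μ (c ⊗ₜ d)) := by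
  have := Phi_swapLL μ ((a ⊗ₜ b) ⊗ₜ (c ⊗ₜ d))
  simp only [swapLL_tmul, Phi_tmul] at this
  rw [this]; ring

lemma swapLL_swapLL (z : (L ⊗[R] N) ⊗[R] (L ⊗[R] N)) :
    swapLL (R := R) (swapLL z) = z := by
  have h : (swapLL (R := R) (L := L) (N := N)).toLinearMap ∘ₗ
      (swapLL (R := R) (L := L) (N := N)).toLinearMap = LinearMap.id := by
    apply TensorProduct.ext_fourfold'
    intro a b c d
    simp
  exact DFunLike.congr_fun h z

lemma Sinv_mul_Sinv : Sinv μ * Sinv μ = 1 := by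
  have h := Phi_swapLL μ (swapLL ((Phi μ).symm 1))
  rw [swapLL_swapLL, LinearEquiv.apply_symm_apply] at h
  rw [← Sinv] at h
  rw [← h]


end Generic

section Decomp

variable {R : Type*} [CommRing R] {L : Type*} {N : Type*}
  [AddCommGroup L] [Module R L] [AddCommGroup N] [Module R N]
  (μ : (L ⊗[R] N) ≃ₗ[R] R)
  {ι : Type*} [Fintype ι] (x : ι → L) (y : ι → N)

lemma hone (hu : ∑ j, x j ⊗ₜ[R] y j = μ.symm 1) : ∑ j, μ (x j ⊗ₜ y j) = 1 := by
  have := congrArg μ hu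
  simpa [map_sum] using this

lemma Ssum (hu : ∑ j, x j ⊗ₜ[R] y j = μ.symm 1) :
    Sinv μ = ∑ j, ∑ k, μ (x k ⊗ₜ y j) * μ (x j ⊗ₜ y k) := by
  have : ∀ j k, μ (x k ⊗ₜ y j) * μ (x j ⊗ₜ y k)
      = Sinv μ * (μ (x j ⊗ₜ y j) * μ (x k ⊗ₜ y k)) := fun j k => B_identity μ _ _ _ _
  calc Sinv μ = Sinv μ * ((∑ j, μ (x j ⊗ₜ y j)) * (∑ k, μ (x k ⊗ₜ y k))) := by
        rw [hone μ x y hu]; ring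
    _ = ∑ j, ∑ k, Sinv μ * (μ (x j ⊗ₜ y j) * μ (x k ⊗ₜ y k)) := by
        rw [Finset.sum_mul_sum, Finset.mul_sum]
        congr 1; funext j; rw [Finset.mul_sum]
    _ = ∑ j, ∑ k, μ (x k ⊗ₜ y j) * μ (x j ⊗ₜ y k) := by
        simp_rw [this]

variable (X : Type*) [AddCommGroup X] [Module R X]

/-- Contraction `(X ⊗ N) ⊗ L → X`, `(x ⊗ b) ⊗ c ↦ μ (c ⊗ b) • x`. -/
noncomputable def theta : ((X ⊗[R] N) ⊗[R] L) →ₗ[R] X :=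
  (TensorProduct.rid R X).toLinearMap ∘ₗ
    (LinearMap.lTensor X (μ.toLinearMap ∘ₗ (TensorProduct.comm R N L).toLinearMap)) ∘ₗ
      (TensorProduct.assoc R X N L).toLinearMap

@[simp] lemma theta_tmul (x' : X) (b : N) (c : L) :
    theta μ X ((x' ⊗ₜ b) ⊗ₜ c) = μ (c ⊗ₜ b) • x' := by
  simp [theta]

lemma theta_surjective (hu : ∑ j, x j ⊗ₜ[R] y j = μ.symm 1) :
    Function.Surjective (theta μ X) := by
  intro x'
  refine ⟨∑ j, (x' ⊗ₜ y j) ⊗ₜ x j, ?_⟩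
  rw [map_sum]
  simp only [theta_tmul]
  rw [← Finset.sum_smul, hone μ x y hu, one_smul]

variable {X}

lemma cancel_rTensor (hu : ∑ j, x j ⊗ₜ[R] y j = μ.symm 1)
    {Y : Type*} [AddCommGroup Y] [Module R Y] (γ₁ γ₂ : X →ₗ[R] Y)
    (h : LinearMap.rTensor N γ₁ = LinearMap.rTensor N γ₂) : γ₁ = γ₂ := by
  have hnat : ∀ γ : X →ₗ[R] Y,
      theta μ Y ∘ₗ LinearMap.rTensor L (LinearMap.rTensor N γ) = γ ∘ₗ theta μ X := by
    intro γ
    apply TensorProduct.ext_threefold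
    intro a b c
    simp [map_smul]
  apply LinearMap.ext
  intro x'
  obtain ⟨z, rfl⟩ := theta_surjective μ x y X hu x'
  have h1 := DFunLike.congr_fun (hnat γ₁) z
  have h2 := DFunLike.congr_fun (hnat γ₂) z
  simp only [LinearMap.comp_apply] at h1 h2
  rw [← h1, ← h2, h]

/-- `ℓ ↦ ∑ⱼ μ(ℓ ⊗ yⱼ) • xⱼ`. -/
noncomputable def alphaMap : L →ₗ[R] L :=
  ∑ j, LinearMap.toSpanSingleton R L (x j) ∘ₗ
    ((TensorProduct.curry μ.toLinearMap).flip (y j))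

lemma alphaMap_apply (ℓ : L) : alphaMap μ x y ℓ = ∑ j, μ (ℓ ⊗ₜ y j) • x j := by
  simp [alphaMap, LinearMap.sum_apply, LinearMap.toSpanSingleton_apply]

lemma alphaMap_eq (hu : ∑ j, x j ⊗ₜ[R] y j = μ.symm 1) :
    alphaMap μ x y = Sinv μ • LinearMap.id := by
  apply cancel_rTensor μ x y hu
  have key : μ.toLinearMap ∘ₗ LinearMap.rTensor N (alphaMap μ x y)
      = μ.toLinearMap ∘ₗ LinearMap.rTensor N ((Sinv μ) • LinearMap.id) := by
    apply TensorProduct.ext'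
    intro a b
    simp only [LinearMap.comp_apply, LinearMap.rTensor_tmul, LinearMap.smul_apply,
      LinearMap.id_apply, LinearEquiv.coe_coe]
    rw [alphaMap_apply, sum_tmul, map_sum]
    have : ∀ j, μ ((μ (a ⊗ₜ y j) • x j) ⊗ₜ b) = Sinv μ * (μ (x j ⊗ₜ y j) * μ (a ⊗ₜ b)) := by
      intro j
      rw [← smul_tmul', map_smul, smul_eq_mul]
      exact B_identity μ (x j) a (y j) b
    rw [Finset.sum_congr rfl (fun j _ => this j), ← Finset.mul_sum, ← Finset.sum_mul,
      hone μ x y hu, one_mul, ← smul_tmul', map_smul, smul_eq_mul]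
  apply LinearMap.ext
  intro z
  apply μ.injective
  exact DFunLike.congr_fun key z

lemma dual_basis (hu : ∑ j, x j ⊗ₜ[R] y j = μ.symm 1) (ℓ : L) :
    ∑ j, (Sinv μ * μ (ℓ ⊗ₜ y j)) • x j = ℓ := by
  have h := DFunLike.congr_fun (alphaMap_eq μ x y hu) ℓ
  rw [alphaMap_apply] at h
  simp only [LinearMap.smul_apply, LinearMap.id_apply] at h
  calc ∑ j, (Sinv μ * μ (ℓ ⊗ₜ y j)) • x j = Sinv μ • ∑ j, μ (ℓ ⊗ₜ y j) • x j := by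
        rw [Finset.smul_sum]; congr 1; funext j; rw [smul_smul]
    _ = Sinv μ • Sinv μ • ℓ := by rw [h]
    _ = (Sinv μ * Sinv μ) • ℓ := by rw [smul_smul]
    _ = ℓ := by rw [Sinv_mul_Sinv, one_smul]

/-- `(a ⊗ b) ⊗ c ↦ μ(a ⊗ b) • c`. -/
noncomputable def DoneMap : ((L ⊗[R] N) ⊗[R] L) →ₗ[R] L :=
  (TensorProduct.lid R L).toLinearMap ∘ₗ LinearMap.rTensor L μ.toLinearMap

@[simp] lemma DoneMap_tmul (a : L) (b : N) (c : L) :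
    DoneMap μ ((a ⊗ₜ b) ⊗ₜ c) = μ (a ⊗ₜ b) • c := by
  simp [DoneMap]

lemma D_identity (hu : ∑ j, x j ⊗ₜ[R] y j = μ.symm 1) (a c : L) (b : N) :
    μ (c ⊗ₜ b) • a = Sinv μ • (μ (a ⊗ₜ b) • c) := by
  have hmain : theta μ L = Sinv μ • DoneMap μ := by
    apply cancel_rTensor μ x y hu
    have key : μ.toLinearMap ∘ₗ LinearMap.rTensor N (theta μ L)
        = μ.toLinearMap ∘ₗ LinearMap.rTensor N ((Sinv μ) • DoneMap μ) := by
      apply TensorProduct.ext_fourfold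
      intro a' b' c' d'
      simp only [LinearMap.comp_apply, LinearMap.rTensor_tmul, LinearMap.smul_apply,
        LinearEquiv.coe_coe, theta_tmul, DoneMap_tmul]
      rw [← smul_tmul', map_smul, smul_eq_mul, ← smul_tmul', ← smul_tmul', map_smul, map_smul,
        smul_eq_mul, smul_eq_mul]
      exact B_identity μ a' c' b' d'
    apply LinearMap.ext
    intro z
    apply μ.injective
    exact DFunLike.congr_fun key z
  have := DFunLike.congr_fun hmain ((a ⊗ₜ b) ⊗ₜ c)
  simpa using this

lemma Sinv_eq_one_of_isLocalRing [IsLocalRing R]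
    (hu : ∑ j, x j ⊗ₜ[R] y j = μ.symm 1) : Sinv μ = 1 := by
  have h1 := hone μ x y hu
  -- some diagonal entry is a unit
  have hex : ∃ j, IsUnit (μ (x j ⊗ₜ y j)) := by
    by_contra hcon
    push_neg at hcon
    have hmem : ∀ j : ι, μ (x j ⊗ₜ y j) ∈ IsLocalRing.maximalIdeal R := fun j => hcon j
    have : (1 : R) ∈ IsLocalRing.maximalIdeal R := by
      rw [← h1]; exact Ideal.sum_mem _ (fun j _ => hmem j)
    exact (IsLocalRing.maximalIdeal.isMaximal R).ne_top ((Ideal.eq_top_iff_one _).2 this)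
  obtain ⟨j₀, hj⟩ := hex
  -- L is cyclic, generated by x j₀
  have hcyc : ∀ ℓ : L, ∃ r : R, ℓ = r • x j₀ := by
    intro ℓ
    have hxj : ∀ j, x j = (↑hj.unit⁻¹ * (Sinv μ * μ (x j ⊗ₜ y j₀))) • x j₀ := by
      intro j
      have hD := D_identity μ x y hu (x j) (x j₀) (y j₀)
      have : (↑hj.unit⁻¹ : R) • μ (x j₀ ⊗ₜ y j₀) • x j
          = (↑hj.unit⁻¹ : R) • Sinv μ • μ (x j ⊗ₜ y j₀) • x j₀ := by rw [hD]
      rw [smul_smul, IsUnit.val_inv_mul, one_smul] at this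
      exact this.trans (by rw [smul_smul, smul_smul, mul_assoc])
    have hterm : ∀ j, (Sinv μ * μ (ℓ ⊗ₜ[R] y j)) • x j
        = ((Sinv μ * μ (ℓ ⊗ₜ[R] y j)) * (↑hj.unit⁻¹ * (Sinv μ * μ (x j ⊗ₜ[R] y j₀)))) • x j₀ := by
      intro j
      conv_lhs => rw [hxj j]
      rw [smul_smul]
    refine ⟨∑ j, (Sinv μ * μ (ℓ ⊗ₜ y j)) * (↑hj.unit⁻¹ * (Sinv μ * μ (x j ⊗ₜ y j₀))), ?_⟩
    conv_lhs => rw [← dual_basis μ x y hu ℓ]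
    rw [Finset.sum_smul]
    exact Finset.sum_congr rfl (fun j _ => hterm j)
  have hsym : ∀ (a c : L) (b d : N), μ (c ⊗ₜ b) * μ (a ⊗ₜ d) = μ (a ⊗ₜ b) * μ (c ⊗ₜ d) := by
    intro a c b d
    obtain ⟨r, rfl⟩ := hcyc a
    obtain ⟨r', rfl⟩ := hcyc c
    simp only [← smul_tmul', map_smul, smul_eq_mul]
    ring
  rw [Ssum μ x y hu]
  calc ∑ j, ∑ k, μ (x k ⊗ₜ y j) * μ (x j ⊗ₜ y k)
      = ∑ j, ∑ k, μ (x j ⊗ₜ y j) * μ (x k ⊗ₜ y k) := by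
        apply Finset.sum_congr rfl; intro j _
        apply Finset.sum_congr rfl; intro k _
        exact hsym (x j) (x k) (y j) (y k)
    _ = (∑ j, μ (x j ⊗ₜ y j)) * (∑ k, μ (x k ⊗ₜ y k)) := by
        rw [Finset.sum_mul_sum]
    _ = 1 := by rw [h1, one_mul]

end Decomp


section Global

variable {R : Type*} [CommRing R] {L : Type*} {N : Type*}
  [AddCommGroup L] [Module R L] [AddCommGroup N] [Module R N]

open TensorProduct.AlgebraTensorModule in
set_option maxHeartbeats 1000000 in
set_option synthInstance.maxHeartbeats 400000 in
theorem Sinv_eq_one (μ : (L ⊗[R] N) ≃ₗ[R] R) : Sinv μ = 1 := by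
  obtain ⟨T, hT⟩ := TensorProduct.exists_finset (μ.symm 1)
  set x : {p : L × N // p ∈ T} → L := fun p => p.1.1 with hx
  set y : {p : L × N // p ∈ T} → N := fun p => p.1.2 with hy
  have hu : ∑ j, x j ⊗ₜ[R] y j = μ.symm 1 := by
    rw [hT]
    exact Finset.sum_attach T (fun p => p.1 ⊗ₜ[R] p.2)
  have key : ∀ (J : Ideal R) (_ : J.IsMaximal),
      algebraMap R (Localization.AtPrime J) (Sinv μ - 1) = 0 := by
    intro J hJ
    set A := Localization.AtPrime J with hA
    let μA : ((A ⊗[R] L) ⊗[A] (A ⊗[R] N)) ≃ₗ[A] A :=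
      ((distribBaseChange R A L N).symm.trans
        (congr (LinearEquiv.refl A A) μ)).trans (TensorProduct.AlgebraTensorModule.rid R A A)
    have hnat : ∀ (a : L) (b : N),
        μA (((1 : A) ⊗ₜ a) ⊗ₜ ((1 : A) ⊗ₜ b)) = algebraMap R A (μ (a ⊗ₜ b)) := by
      intro a b
      simp only [μA, LinearEquiv.trans_apply, distribBaseChange, LinearEquiv.symm_symm,
        TensorProduct.AlgebraTensorModule.cancelBaseChange_tmul, one_smul,
        TensorProduct.AlgebraTensorModule.assoc_tmul, TensorProduct.AlgebraTensorModule.congr_tmul, LinearEquiv.refl_apply,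
        TensorProduct.AlgebraTensorModule.rid_tmul, Algebra.algebraMap_eq_smul_one]
    set xA : {p : L × N // p ∈ T} → (A ⊗[R] L) := fun j => (1 : A) ⊗ₜ x j with hxA
    set yA : {p : L × N // p ∈ T} → (A ⊗[R] N) := fun j => (1 : A) ⊗ₜ y j with hyA
    have huA : ∑ j, xA j ⊗ₜ[A] yA j = μA.symm 1 := by
      rw [LinearEquiv.eq_symm_apply, map_sum]
      simp only [hxA, hyA, hnat]
      rw [← map_sum, hone μ x y hu, map_one]
    have hSA : Sinv μA = 1 := Sinv_eq_one_of_isLocalRing μA xA yA huA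
    have hmap : algebraMap R A (Sinv μ) = Sinv μA := by
      rw [Ssum μ x y hu, Ssum μA xA yA huA, map_sum]
      refine Finset.sum_congr rfl (fun j _ => ?_)
      rw [map_sum]
      refine Finset.sum_congr rfl (fun k _ => ?_)
      rw [map_mul, hxA, hyA]
      simp only [hnat]
    rw [map_sub, map_one, hmap, hSA, sub_self]
  have h2 : Sinv μ - 1 = 0 := eq_zero_of_localization _ key
  exact sub_eq_zero.mp h2

theorem mu_symm (μ : (L ⊗[R] N) ≃ₗ[R] R) (a c : L) (b d : N) :
    μ (c ⊗ₜ b) * μ (a ⊗ₜ d) = μ (a ⊗ₜ b) * μ (c ⊗ₜ d) := by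
  rw [B_identity μ a c b d, Sinv_eq_one, one_mul]

theorem dual_basis' (μ : (L ⊗[R] N) ≃ₗ[R] R) {ι : Type*} [Fintype ι]
    (x : ι → L) (y : ι → N) (hu : ∑ j, x j ⊗ₜ[R] y j = μ.symm 1) (ℓ : L) :
    ∑ j, μ (ℓ ⊗ₜ y j) • x j = ℓ := by
  have := dual_basis μ x y hu ℓ
  rw [Sinv_eq_one] at this
  simpa using this

end Global


section Ext

open ExteriorAlgebra

variable {R : Type*} [CommRing R] {M : Type*} [AddCommGroup M] [Module R M]

lemma iota_anticomm (a b : M) :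
    ι R a * ι R b + ι R b * ι R a = 0 := by
  have h := ι_sq_zero (R := R) (a + b)
  rw [map_add, add_mul, mul_add, mul_add, ι_sq_zero, ι_sq_zero] at h
  simpa using h

lemma alt_expand {P : Type*} [AddCommGroup P] [Module R P] {r t : ℕ}
    (f : M [⋀^Fin r]→ₗ[R] P) (u : Fin t → M) (v : Fin r → M)
    (hv : ∀ j, v j ∈ Submodule.span R (Set.range u)) :
    f v ∈ Submodule.span R
      {z | ∃ k : Fin r → Fin t, Function.Injective k ∧ z = f (u ∘ k)} := by
  have hA : ∀ j, ∃ c : Fin t → R, ∑ i, c i • u i = v j := fun j =>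
    (Submodule.mem_span_range_iff_exists_fun R).1 (hv j)
  choose A hA using hA
  have hv' : v = fun j => ∑ i, A j i • u i := funext fun j => (hA j).symm
  rw [hv']
  have hexp : f (fun j => ∑ i, A j i • u i)
      = ∑ k : Fin r → Fin t, (∏ j, A j (k j)) • f (u ∘ k) := by
    have h1 : f.toMultilinearMap (fun j => ∑ i, A j i • u i)
        = ∑ k : Fin r → Fin t, f.toMultilinearMap (fun j => A j (k j) • u (k j)) :=
      f.toMultilinearMap.map_sum (fun j i => A j i • u i)
    have h2 : ∀ k : Fin r → Fin t,
        f.toMultilinearMap (fun j => A j (k j) • u (k j))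
          = (∏ j, A j (k j)) • f (u ∘ k) :=
      fun k => f.toMultilinearMap.map_smul_univ (fun j => A j (k j)) (fun j => u (k j))
    exact h1.trans (Finset.sum_congr rfl fun k _ => h2 k)
  rw [hexp]
  apply Submodule.sum_mem
  intro k _
  by_cases hk : Function.Injective k
  · exact Submodule.smul_mem _ _ (Submodule.subset_span ⟨k, hk, rfl⟩)
  · obtain ⟨p, q, hpq, hne⟩ := Function.not_injective_iff.1 hk
    have : f (u ∘ k) = 0 :=
      f.map_eq_zero_of_eq (u ∘ k) (by simp [Function.comp, hpq]) hne
    rw [this, smul_zero]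
    exact Submodule.zero_mem _

lemma alt_zero {P : Type*} [AddCommGroup P] [Module R P] {n : ℕ}
    (f : M [⋀^Fin (n+1)]→ₗ[R] P) (u : Fin n → M) (v : Fin (n+1) → M)
    (hv : ∀ j, v j ∈ Submodule.span R (Set.range u)) : f v = 0 := by
  have h := alt_expand f u v hv
  have hempty : {z | ∃ k : Fin (n+1) → Fin n, Function.Injective k ∧ z = f (u ∘ k)} = ∅ := by
    ext z
    simp only [Set.mem_setOf_eq, Set.mem_empty_iff_false, iff_false, not_exists]
    intro k hk
    exact absurd (Fintype.card_le_of_injective k hk.1) (by simp)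
  rw [hempty, Submodule.span_empty, Submodule.mem_bot] at h
  exact h

lemma units_int_smul_mem {p : Submodule R (ExteriorAlgebra R M)}
    (uη : ℤˣ) {z : ExteriorAlgebra R M} (hz : z ∈ p) : uη • z ∈ p := by
  rcases Int.units_eq_one_or uη with h | h <;> rw [h]
  · simpa using hz
  · have : ((-1 : ℤˣ) : ℤ) • z = -z := by
      simp
    rw [Units.smul_def, this]
    exact Submodule.neg_mem _ hz

lemma alt_mem_span_single {P : Type*} [AddCommGroup P] [Module R P] {n : ℕ}
    (f : M [⋀^Fin n]→ₗ[R] P) (u : Fin n → M) (v : Fin n → M)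
    (hv : ∀ j, v j ∈ Submodule.span R (Set.range u)) :
    f v ∈ Submodule.span R {f u} := by
  have h := alt_expand f u v hv
  refine Submodule.span_le.mpr ?_ h
  rintro z ⟨k, hk, rfl⟩
  have hbij : Function.Bijective k := Finite.injective_iff_bijective.1 hk
  have : u ∘ k = u ∘ (Equiv.ofBijective k hbij) := rfl
  rw [this, AlternatingMap.map_perm]
  rcases Int.units_eq_one_or (Equiv.Perm.sign (Equiv.ofBijective k hbij)) with h1 | h1 <;>
    rw [h1]
  · simpa using Submodule.mem_span_singleton_self (f u)
  · have hne : ((-1 : ℤˣ) : ℤ) • f u = -(f u) := by simp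
    rw [Units.smul_def, hne]
    exact Submodule.neg_mem _ (Submodule.mem_span_singleton_self (f u))

end Ext


section Ext2

open ExteriorAlgebra

variable {R : Type*} [CommRing R] {M : Type*} [AddCommGroup M] [Module R M]

lemma iMulti_zero_of_pair {r : ℕ} (wv : Fin r → M) (p q : Fin r) (hpq : p ≠ q)
    (h01 : ι R (wv p) * ι R (wv q) = 0) : ιMulti R r wv = 0 := by
  have hr : 2 ≤ r := by
    by_contra h
    push_neg at h
    interval_cases r
    · exact p.elim0
    · exact hpq (Subsingleton.elim p q)
  obtain ⟨m, rfl⟩ : ∃ m, r = m + 2 := ⟨r - 2, by omega⟩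
  set σ1 := Equiv.swap (0 : Fin (m + 2)) p with hσ1
  have hp' : σ1 q ≠ 0 := by
    intro h
    have : q = p := σ1.injective (by rw [h, hσ1, Equiv.swap_apply_right])
    exact hpq this.symm
  set σ2 := Equiv.swap (1 : Fin (m + 2)) (σ1 q) with hσ2
  set σ := σ2.trans σ1 with hσ
  have hσ0 : σ 0 = p := by
    show σ1 (σ2 0) = p
    have h20 : σ2 0 = 0 :=
      Equiv.swap_apply_of_ne_of_ne (by exact zero_ne_one) (Ne.symm hp')
    rw [h20, hσ1]
    exact Equiv.swap_apply_left 0 p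
  have hσ1q : σ 1 = q := by
    show σ1 (σ2 1) = q
    have h21 : σ2 1 = σ1 q := by rw [hσ2]; exact Equiv.swap_apply_left _ _
    rw [h21, hσ1]
    exact Equiv.swap_apply_self _ _ _
  have hperm := AlternatingMap.map_perm (ιMulti R (m + 2)) wv σ
  have hz : ιMulti R (m + 2) (wv ∘ ⇑σ) = 0 := by
    rw [ιMulti_succ_apply, ιMulti_succ_apply, ← mul_assoc]
    have e0 : (wv ∘ ⇑σ) 0 = wv p := by
      show wv (σ 0) = wv p
      rw [hσ0]
    have e1 : Matrix.vecTail (wv ∘ ⇑σ) 0 = wv q := by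
      show wv (σ (Fin.succ 0)) = wv q
      have h1 : Fin.succ (0 : Fin (m + 1)) = 1 := rfl
      rw [h1, hσ1q]
    rw [e0, e1, h01, zero_mul]
  rw [hz] at hperm
  rcases Int.units_eq_one_or (Equiv.Perm.sign σ) with h1 | h1 <;> rw [h1] at hperm
  · simpa using hperm.symm
  · rw [Units.smul_def] at hperm
    have h2' : ((-1 : ℤˣ) : ℤ) • (ιMulti R (m + 2)) wv = -(ιMulti R (m + 2)) wv := by simp
    rw [h2'] at hperm
    exact neg_eq_zero.mp hperm.symm

end Ext2

open ExteriorAlgebra TensorProduct in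
set_option maxHeartbeats 2000000 in
theorem stmt10_main (R : Type u) [CommRing R] (M : Type v) [AddCommGroup M] [Module R M]
    [Module.Finite R M] [Module.Projective R M] (n : ℕ) (s : Fin n → M)
    (i : (Fin n → R) →ₗ[R] M) (hi : ∀ k, i (Pi.single k 1) = s k)
    (hinj : Function.Injective i)
    (hL : ∃ (N : Type v) (_ : AddCommGroup N) (_ : Module R N),
      Nonempty ((TensorProduct R (M ⧸ LinearMap.range i) N) ≃ₗ[R] R)) :
    let w : M → ↥(⋀[R]^(n + 1) M) := fun m =>
      ⟨ιMulti R (n + 1) (Fin.cons m s),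
        ιMulti_range R (n + 1) (Set.mem_range_self _)⟩
    Function.Surjective w ∧
    (∀ m : M, w m = 0 ↔ m ∈ LinearMap.range i) ∧
    Nonempty ((↥(⋀[R]^(n + 1) M)) ≃ₗ[R] (M ⧸ LinearMap.range i)) := by
  intro w
  classical
  obtain ⟨NN, iN1, iN2, ⟨μ⟩⟩ := hL
  set Lq := M ⧸ LinearMap.range i with hLq
  let π : M →ₗ[R] Lq := (LinearMap.range i).mkQ
  obtain ⟨T, hT⟩ := TensorProduct.exists_finset (μ.symm 1)
  let xx : {p : Lq × NN // p ∈ T} → Lq := fun p => p.1.1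
  let yy : {p : Lq × NN // p ∈ T} → NN := fun p => p.1.2
  have hu : ∑ j, xx j ⊗ₜ[R] yy j = μ.symm 1 := by
    rw [hT]
    exact Finset.sum_attach T fun p => p.1 ⊗ₜ[R] p.2
  have hdb : ∀ ℓ : Lq, ∑ j, μ (ℓ ⊗ₜ yy j) • xx j = ℓ := dual_basis' μ xx yy hu
  have hsym : ∀ (a c : Lq) (b d : NN),
      μ (c ⊗ₜ b) * μ (a ⊗ₜ d) = μ (a ⊗ₜ b) * μ (c ⊗ₜ d) := mu_symm μ
  have hexlift : ∀ j, ∃ m : M, π m = xx j := fun j => Submodule.mkQ_surjective _ _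
  choose xh hxh using hexlift
  let τ : Lq →ₗ[R] M := ∑ j, LinearMap.toSpanSingleton R M (xh j) ∘ₗ
    ((TensorProduct.curry μ.toLinearMap).flip (yy j))
  have hτ : ∀ ℓ, τ ℓ = ∑ j, μ (ℓ ⊗ₜ yy j) • xh j := by
    intro ℓ
    simp [τ, LinearMap.sum_apply, LinearMap.toSpanSingleton_apply]
  have hπτ : ∀ ℓ, π (τ ℓ) = ℓ := by
    intro ℓ
    rw [hτ, map_sum]
    simp only [map_smul, hxh]
    exact hdb ℓ
  let φ : M →ₗ[R] ExteriorAlgebra R M :=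
    { toFun := fun m => ιMulti R (n + 1) (Fin.cons m s)
      map_add' := fun m₁ m₂ => (ιMulti R (n + 1)).map_vecCons_add s m₁ m₂
      map_smul' := fun c m => (ιMulti R (n + 1)).map_vecCons_smul s c m }
  have hφ : ∀ m, φ m = ιMulti R (n + 1) (Fin.cons m s) := fun _ => rfl
  have hia : ∀ a : Fin n → R, i a = ∑ k, a k • s k := by
    intro a
    have h1 : a = ∑ k, a k • (Pi.single k (1 : R) : Fin n → R) := by
      have h2 : ∀ k, a k • (Pi.single k (1 : R) : Fin n → R) = Pi.single k (a k) := by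
        intro k
        funext p
        rcases eq_or_ne p k with rfl | hpk
        · simp
        · simp [Pi.single_apply, hpk]
      rw [Finset.sum_congr rfl fun k _ => h2 k, Finset.univ_sum_single]
    calc i a = i (∑ k, a k • (Pi.single k (1 : R) : Fin n → R)) := by rw [← h1]
      _ = ∑ k, a k • s k := by
          rw [map_sum]
          exact Finset.sum_congr rfl fun k _ => by rw [map_smul, hi]
  have hKspan : ∀ m ∈ LinearMap.range i, m ∈ Submodule.span R (Set.range s) := by
    rintro m ⟨a, rfl⟩
    rw [hia]
    exact Submodule.sum_mem _ fun k _ =>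
      Submodule.smul_mem _ _ (Submodule.subset_span (Set.mem_range_self k))
  have hφs : ∀ k, φ (s k) = 0 := by
    intro k
    refine (ιMulti R (n + 1)).map_eq_zero_of_eq (Fin.cons (s k) s)
      (i := 0) (j := k.succ) ?_ (Fin.succ_ne_zero k).symm
    simp
  have hφK : ∀ m ∈ LinearMap.range i, φ m = 0 := by
    rintro m ⟨a, rfl⟩
    rw [hia, map_sum]
    rw [Finset.sum_congr rfl fun k _ => by rw [map_smul, hφs, smul_zero]]
    exact Finset.sum_const_zero
  have hdecomp : ∀ m : M, m - τ (π m) ∈ LinearMap.range i := by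
    intro m
    have h0 : π (m - τ (π m)) = 0 := by
      rw [map_sub, hπτ, sub_self]
    have h1 := LinearMap.mem_ker.2 h0
    rwa [Submodule.ker_mkQ] at h1
  have hφτ : ∀ m : M, φ m = φ (τ (π m)) := by
    intro m
    have h0 := hφK _ (hdecomp m)
    rw [map_sub] at h0
    exact sub_eq_zero.mp h0
  have hW2 : ∀ ℓ ℓ' : Lq, ι R (τ ℓ) * ι R (τ ℓ') = 0 := by
    intro ℓ ℓ'
    have e1 : ι R (τ ℓ) = ∑ j, μ (ℓ ⊗ₜ yy j) • ι R (xh j) := by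
      rw [hτ, map_sum]
      exact Finset.sum_congr rfl fun j _ => by rw [map_smul]
    have e2 : ι R (τ ℓ') = ∑ j, μ (ℓ' ⊗ₜ yy j) • ι R (xh j) := by
      rw [hτ, map_sum]
      exact Finset.sum_congr rfl fun j _ => by rw [map_smul]
    rw [e1, e2, Finset.sum_mul_sum, ← Finset.sum_product']
    refine Finset.sum_ninvolution (fun p => (p.2, p.1)) ?_ ?_ (fun p => by simp) (fun p => by simp)
    · intro p
      rw [smul_mul_smul_comm, smul_mul_smul_comm]
      have hc : μ (ℓ ⊗ₜ yy p.2) * μ (ℓ' ⊗ₜ yy p.1) = μ (ℓ ⊗ₜ yy p.1) * μ (ℓ' ⊗ₜ yy p.2) := by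
        have h := hsym ℓ ℓ' (yy p.1) (yy p.2)
        rw [mul_comm] at h
        exact h
      rw [hc, ← smul_add, iota_anticomm, smul_zero]
    · intro p hfp heq
      apply hfp
      have h21 : p.2 = p.1 := congrArg Prod.fst heq
      rw [h21, smul_mul_smul_comm, ι_sq_zero, smul_zero]
  -- coordinates for injectivity
  let ϑ : M →ₗ[R] M := LinearMap.id - τ ∘ₗ π
  have hϑ : ∀ m, ϑ m = m - τ (π m) := fun m => rfl
  have hϑmem : ∀ m, ϑ m ∈ LinearMap.range i := fun m => hdecomp m
  let eI := LinearEquiv.ofInjective i hinj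
  let cmap : M →ₗ[R] (Fin n → R) :=
    eI.symm.toLinearMap ∘ₗ LinearMap.codRestrict (LinearMap.range i) ϑ hϑmem
  have hπs : ∀ r : Fin n, π (s r) = 0 := by
    intro r
    have hsK : s r ∈ LinearMap.range i := ⟨Pi.single r 1, hi r⟩
    rw [← Submodule.ker_mkQ (LinearMap.range i)] at hsK
    exact hsK
  have hcs : ∀ r : Fin n, cmap (s r) = Pi.single r 1 := by
    intro r
    have hsK : s r ∈ LinearMap.range i := ⟨Pi.single r 1, hi r⟩
    have hϑs : ϑ (s r) = s r := by
      rw [hϑ, hπs, map_zero, sub_zero]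
    have hval : LinearMap.codRestrict (LinearMap.range i) ϑ hϑmem (s r) = ⟨s r, hsK⟩ := by
      apply Subtype.ext
      exact hϑs
    show eI.symm (LinearMap.codRestrict _ ϑ hϑmem (s r)) = Pi.single r 1
    rw [hval, LinearEquiv.symm_apply_eq]
    apply Subtype.ext
    show s r = i (Pi.single r 1)
    exact (hi r).symm
  have hcτ : ∀ ℓ, cmap (τ ℓ) = 0 := by
    intro ℓ
    have hϑτ : ϑ (τ ℓ) = 0 := by
      rw [hϑ, hπτ, sub_self]
    have hval : LinearMap.codRestrict (LinearMap.range i) ϑ hϑmem (τ ℓ) = 0 := by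
      apply Subtype.ext
      simpa using hϑτ
    show eI.symm (LinearMap.codRestrict _ ϑ hϑmem (τ ℓ)) = 0
    rw [hval, map_zero]
  have hinjφτ : ∀ ℓ : Lq, φ (τ ℓ) = 0 → ℓ = 0 := by
    intro ℓ h0
    have hval : ∀ j, μ (ℓ ⊗ₜ yy j) = 0 := by
      intro j
      let dj : M →ₗ[R] R := ((TensorProduct.curry μ.toLinearMap).flip (yy j)) ∘ₗ π
      let gj : Fin (n + 1) → (M →ₗ[R] R) :=
        Fin.cons dj (fun k => LinearMap.proj k ∘ₗ cmap)
      let Fj : M [⋀^Fin (n + 1)]→ₗ[R] R :=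
        (Matrix.detRowAlternating).compLinearMap (LinearMap.pi gj)
      let Fam : ∀ iN : ℕ, M [⋀^Fin iN]→ₗ[R] R :=
        Function.update (fun _ => 0) (n + 1) Fj
      have h1 : liftAlternating Fam (φ (τ ℓ)) = Fj (Fin.cons (τ ℓ) s) := by
        rw [hφ, liftAlternating_apply_ιMulti]
        show Function.update (fun iN => (0 : M [⋀^Fin iN]→ₗ[R] R)) (n + 1) Fj (n + 1)
          (Fin.cons (τ ℓ) s) = _
        rw [Function.update_self]
      have h2 : Fj (Fin.cons (τ ℓ) s) = μ (ℓ ⊗ₜ yy j) := by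
        have hmat : (fun q => LinearMap.pi gj ((Fin.cons (τ ℓ) s : Fin (n + 1) → M) q))
            = Matrix.diagonal (Fin.cons (μ (ℓ ⊗ₜ yy j)) (fun _ => (1 : R))) := by
          funext q p
          refine Fin.cases ?_ ?_ q
          · refine Fin.cases ?_ ?_ p
            · simp only [LinearMap.pi_apply, Fin.cons_zero, Matrix.diagonal_apply_eq]
              show dj (τ ℓ) = μ (ℓ ⊗ₜ yy j)
              show ((TensorProduct.curry μ.toLinearMap).flip (yy j)) (π (τ ℓ)) = _
              rw [hπτ]
              rfl
            · intro k
              simp only [LinearMap.pi_apply, Fin.cons_zero]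
              have hd : Matrix.diagonal (Fin.cons (μ (ℓ ⊗ₜ yy j)) (fun _ => (1 : R)))
                  0 k.succ = 0 :=
                Matrix.diagonal_apply_ne _ (Fin.succ_ne_zero k).symm
              rw [hd]
              show (LinearMap.proj k ∘ₗ cmap) (τ ℓ) = 0
              rw [LinearMap.comp_apply, hcτ]
              rfl
          · intro r
            refine Fin.cases ?_ ?_ p
            · simp only [LinearMap.pi_apply, Fin.cons_succ]
              have hd : Matrix.diagonal (Fin.cons (μ (ℓ ⊗ₜ yy j)) (fun _ => (1 : R)))
                  r.succ 0 = 0 :=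
                Matrix.diagonal_apply_ne _ (Fin.succ_ne_zero r)
              rw [hd]
              show dj (s r) = 0
              show ((TensorProduct.curry μ.toLinearMap).flip (yy j)) (π (s r)) = 0
              rw [hπs, map_zero]
            · intro k
              simp only [LinearMap.pi_apply, Fin.cons_succ]
              have hlhs : gj k.succ (s r) = (Pi.single r (1 : R) : Fin n → R) k := by
                show (LinearMap.proj k ∘ₗ cmap) (s r) = _
                rw [LinearMap.comp_apply, hcs]
                rfl
              rw [hlhs]
              by_cases hrk : k = r
              · subst hrk
                simp [Matrix.diagonal_apply_eq]
              · rw [Pi.single_apply, if_neg hrk, Matrix.diagonal_apply_ne]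
                intro hcon
                exact hrk (Fin.succ_injective _ hcon).symm
        have hFj : Fj (Fin.cons (τ ℓ) s)
            = Matrix.detRowAlternating
              (fun q => LinearMap.pi gj ((Fin.cons (τ ℓ) s : Fin (n + 1) → M) q)) := rfl
        rw [hFj, hmat]
        have hdet : Matrix.detRowAlternating
              (Matrix.diagonal (Fin.cons (μ (ℓ ⊗ₜ yy j)) (fun _ => (1 : R)) : Fin (n + 1) → R))
            = Matrix.det (Matrix.diagonal
                (Fin.cons (μ (ℓ ⊗ₜ yy j)) (fun _ => (1 : R)) : Fin (n + 1) → R)) := rfl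
        rw [hdet, Matrix.det_diagonal, Fin.prod_univ_succ]
        simp
      rw [h0, map_zero] at h1
      rw [← h2, ← h1]
    calc ℓ = ∑ j, μ (ℓ ⊗ₜ yy j) • xx j := (hdb ℓ).symm
      _ = 0 := by
          rw [Finset.sum_congr rfl fun j _ => by rw [hval j, zero_smul]]
          exact Finset.sum_const_zero
  -- surjectivity generators
  have hgen : ∀ v : Fin (n + 1) → M, ιMulti R (n + 1) v ∈ LinearMap.range φ := by
    intro v
    let vT : Fin (n + 1) → M := fun j => τ (π (v j))
    let vI : Fin (n + 1) → M := fun j => v j - vT j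
    have hvIs : ∀ j, vI j ∈ Submodule.span R (Set.range s) := fun j => hKspan _ (hdecomp (v j))
    have hsplit : ιMulti R (n + 1) v
        = ∑ S : Finset (Fin (n + 1)), ιMulti R (n + 1) (S.piecewise vI vT) := by
      have hv : v = fun j => vI j + vT j := funext fun j => by
        show v j = v j - vT j + vT j
        abel
      calc ιMulti R (n + 1) v = (ιMulti R (n + 1)).toMultilinearMap (vI + vT) := by
            rw [hv]; rfl
        _ = ∑ S : Finset (Fin (n + 1)),
              (ιMulti R (n + 1)).toMultilinearMap (S.piecewise vI vT) :=
            MultilinearMap.map_add_univ _ vI vT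
        _ = _ := rfl
    rw [hsplit]
    refine Submodule.sum_mem _ fun S _ => ?_
    by_cases hS : Sᶜ = (∅ : Finset (Fin (n + 1)))
    · have hSuniv : S = Finset.univ := (Finset.compl_eq_empty_iff S).1 hS
      rw [hSuniv, Finset.piecewise_univ]
      rw [alt_zero (ιMulti R (n + 1)) s vI hvIs]
      exact Submodule.zero_mem _
    · obtain ⟨q, hq⟩ := Finset.nonempty_iff_ne_empty.2 hS
      have hqS : q ∉ S := Finset.mem_compl.1 hq
      have hwq : S.piecewise vI vT q = τ (π (v q)) :=
        Finset.piecewise_eq_of_notMem _ _ _ hqS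
      by_cases h2 : ∃ q', q' ∉ S ∧ q' ≠ q
      · obtain ⟨q', hq'S, hne⟩ := h2
        have hwq' : S.piecewise vI vT q' = τ (π (v q')) :=
          Finset.piecewise_eq_of_notMem _ _ _ hq'S
        rw [iMulti_zero_of_pair (S.piecewise vI vT) q q' (Ne.symm hne)
          (by rw [hwq, hwq']; exact hW2 _ _)]
        exact Submodule.zero_mem _
      · push_neg at h2
        set wf := S.piecewise vI vT with hwf
        let σ := Equiv.swap (0 : Fin (n + 1)) q
        have hperm := AlternatingMap.map_perm (ιMulti R (n + 1)) wf σ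
        have hwfσ : ιMulti R (n + 1) wf
            = Equiv.Perm.sign σ • ιMulti R (n + 1) (wf ∘ ⇑σ) := by
          rw [hperm, smul_smul, Int.units_mul_self, one_smul]
        rw [hwfσ]
        apply units_int_smul_mem
        have h0 : (wf ∘ ⇑σ) 0 = τ (π (v q)) := by
          show wf (σ 0) = _
          have : σ 0 = q := Equiv.swap_apply_left 0 q
          rw [this]
          exact hwq
        have htail : ∀ k : Fin n, (wf ∘ ⇑σ) k.succ ∈ Submodule.span R (Set.range s) := by
          intro k
          have hne0 : σ k.succ ≠ q := by
            intro h
            have h' : k.succ = (0 : Fin (n + 1)) :=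
              σ.injective (h.trans (Equiv.swap_apply_left 0 q).symm)
            exact Fin.succ_ne_zero k h'
          have hmem : σ k.succ ∈ S := by
            by_contra hnm
            exact hne0 (h2 _ hnm)
          show wf (σ k.succ) ∈ _
          rw [hwf, Finset.piecewise_eq_of_mem _ _ _ hmem]
          exact hvIs _
        have hcons : wf ∘ ⇑σ = Fin.cons (τ (π (v q))) (fun k => (wf ∘ ⇑σ) k.succ) := by
          rw [← h0]
          exact (Fin.cons_self_tail (wf ∘ ⇑σ)).symm
        rw [hcons]
        have hcurry : ιMulti R (n + 1) (Fin.cons (τ (π (v q))) (fun k => (wf ∘ ⇑σ) k.succ))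
            = ((ιMulti R (n + 1)).curryLeft (τ (π (v q)))) (fun k => (wf ∘ ⇑σ) k.succ) := rfl
        rw [hcurry]
        have hspan := alt_mem_span_single ((ιMulti R (n + 1)).curryLeft (τ (π (v q)))) s _ htail
        refine Submodule.span_le.mpr ?_ hspan
        intro z hz
        rw [Set.mem_singleton_iff.1 hz]
        exact ⟨τ (π (v q)), rfl⟩
  have hφsurj : ∀ z : ↥(⋀[R]^(n + 1) M), ∃ m : M, φ m = (z : ExteriorAlgebra R M) := by
    intro z
    have hz : (z : ExteriorAlgebra R M)
        ∈ Submodule.span R (Set.range (ιMulti R (n + 1) (M := M))) := by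
      rw [ιMulti_span_fixedDegree]
      exact z.2
    have hz2 : (z : ExteriorAlgebra R M) ∈ LinearMap.range φ := by
      refine Submodule.span_le.mpr ?_ hz
      rintro _ ⟨v, rfl⟩
      exact hgen v
    exact hz2
  refine ⟨?_, ?_, ?_⟩
  · intro z
    obtain ⟨m, hm⟩ := hφsurj z
    exact ⟨m, Subtype.ext hm⟩
  · intro m
    constructor
    · intro h
      have h0 : φ m = 0 := by
        have h' := congrArg Subtype.val h
        rwa [ZeroMemClass.coe_zero] at h'
      have hπm : π m = 0 := by
        apply hinjφτ
        rw [← hφτ m]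
        exact h0
      have h1 := hdecomp m
      rw [hπm, map_zero, sub_zero] at h1
      exact h1
    · intro h
      apply Subtype.ext
      rw [ZeroMemClass.coe_zero]
      exact hφK m h
  · let lmap : Lq →ₗ[R] ↥(⋀[R]^(n + 1) M) :=
      LinearMap.codRestrict _ (φ ∘ₗ τ)
        (fun ℓ => ιMulti_range R (n + 1) (Set.mem_range_self _))
    have hlmap : ∀ ℓ, (lmap ℓ : ExteriorAlgebra R M) = φ (τ ℓ) := fun ℓ => rfl
    have hinj' : Function.Injective lmap := by
      refine LinearMap.ker_eq_bot.mp ((Submodule.eq_bot_iff _).mpr fun ℓ hℓ => ?_)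
      have h0 : φ (τ ℓ) = 0 := by
        have h' := congrArg Subtype.val (LinearMap.mem_ker.mp hℓ)
        rwa [ZeroMemClass.coe_zero] at h'
      exact hinjφτ ℓ h0
    have hsurj' : Function.Surjective lmap := by
      intro z
      obtain ⟨m, hm⟩ := hφsurj z
      refine ⟨π m, Subtype.ext ?_⟩
      rw [hlmap, ← hφτ m, hm]
    exact ⟨(LinearEquiv.ofBijective lmap ⟨hinj', hsurj'⟩).symm⟩

end Stmt10Aux

open ExteriorAlgebra

/-- let `F` (here `M`) be a locally free (finite projective) module of
rank `r = n+1` with sections `s₂, …, s_r` (here `s : Fin n → M`) such that the induced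
map `i : R^{r-1} → M` is injective with invertible cokernel `L` (invertible: some
module tensors with it to `R`).  Then the wedge map `w : M → ⋀^r M`,
`w(m) = m ∧ s₂ ∧ ⋯ ∧ s_r`, is surjective with kernel exactly the image of `i`,
giving a short exact sequence `0 → R^{r-1} → M → ⋀^r M → 0`, and `⋀^r M ≅ L`. -/
theorem stmt10 (R : Type u) [CommRing R] (M : Type v) [AddCommGroup M] [Module R M]
    [Module.Finite R M] [Module.Projective R M] (n : ℕ) (s : Fin n → M)
    (i : (Fin n → R) →ₗ[R] M) (hi : ∀ k, i (Pi.single k 1) = s k)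
    (hinj : Function.Injective i)
    (hL : ∃ (N : Type v) (_ : AddCommGroup N) (_ : Module R N),
      Nonempty ((TensorProduct R (M ⧸ LinearMap.range i) N) ≃ₗ[R] R)) :
    let w : M → ↥(⋀[R]^(n + 1) M) := fun m =>
      ⟨ιMulti R (n + 1) (Fin.cons m s),
        ιMulti_range R (n + 1) (Set.mem_range_self _)⟩
    Function.Surjective w ∧
    (∀ m : M, w m = 0 ↔ m ∈ LinearMap.range i) ∧
    Nonempty ((↥(⋀[R]^(n + 1) M)) ≃ₗ[R] (M ⧸ LinearMap.range i)) :=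
  Stmt10Aux.stmt10_main R M n s i hi hinj hL
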